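/- arXiv:1804.05360 — 3 statements merged into one kernel-verified Lean document; each statement's English description precedes it below -/
import Mathlib

section
/- Let u₀ ∈ ℝ satisfy u₀⁴ + u₀³ + 2u₀² + 4u₀ + 1 = 0. Then the line {(x, y) ∈ ℝ² : y = u₀x} is invariant under the flow of the system ẋ = x²y + y³, ẏ = -4x²y - y³ - xy² - x³: if (x, y) : I → ℝ² is a solution defined on an interval I and y(t₀) = u₀·x(t₀) for some t₀ ∈ I, then y(t) = u₀·x(t) for all t ∈ I. -/
open Set Real

/-- Uniqueness for a scalar linear ODE `w' = Q t * w` on a closed interval,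
with the initial condition `w = 0` at an arbitrary point of the interval. -/
lemma linear_ode_zero {a b : ℝ} (Q w : ℝ → ℝ)
    (hQ : ContinuousOn Q (Icc a b))
    (hw : ∀ t ∈ Icc a b, HasDerivAt w (Q t * w t) t)
    (t₀ : ℝ) (ht₀ : t₀ ∈ Icc a b) (h0 : w t₀ = 0) :
    ∀ t ∈ Icc a b, w t = 0 := by
  have hab : a ≤ b := ht₀.1.trans ht₀.2
  obtain ⟨C, hC⟩ := (isCompact_Icc.image_of_continuousOn hQ).exists_bound_of_continuousOn
    continuousOn_id
  have hC' : ∀ s ∈ Icc a b, |Q s| ≤ C := fun s hs => by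
    simpa using hC (Q s) (mem_image_of_mem Q hs)
  have hC0 : (0:ℝ) ≤ C := le_trans (abs_nonneg _) (hC' t₀ ht₀)
  -- clamped coefficient
  set Q' : ℝ → ℝ := fun s => Q (max a (min s b)) with hQ'def
  have hclamp : ∀ s, max a (min s b) ∈ Icc a b := fun s =>
    ⟨le_max_left _ _, max_le (by linarith [min_le_right s b]) (min_le_right s b)⟩
  have hQ'eq : ∀ s ∈ Icc a b, Q' s = Q s := fun s hs => by
    simp only [hQ'def]
    rw [min_eq_left hs.2, max_eq_right hs.1]
  set v : ℝ → ℝ → ℝ := fun s z => Q' s * z with hvdef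
  set K : NNReal := ⟨C, hC0⟩ with hKdef
  have hv : ∀ s, LipschitzWith K (v s) := by
    intro s
    apply LipschitzWith.of_dist_le_mul
    intro z1 z2
    have : dist (v s z1) (v s z2) = |Q' s| * dist z1 z2 := by
      simp [hvdef, Real.dist_eq, ← mul_sub, abs_mul]
    rw [this]
    have hb : |Q' s| ≤ C := hC' _ (hclamp s)
    exact mul_le_mul_of_nonneg_right hb dist_nonneg
  have hwc : ContinuousOn w (Icc a b) := fun s hs =>
    ((hw s hs).continuousAt).continuousWithinAt
  have hzero : ∀ t ∈ Icc a b, (fun _ : ℝ => (0:ℝ)) t = 0 := fun _ _ => rfl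
  -- forward direction from t₀ to b
  have hfwd : ∀ t ∈ Icc t₀ b, w t = 0 := by
    have := ODE_solution_unique (v := v) (K := K) (f := w) (g := fun _ => 0)
      (a := t₀) (b := b) hv
      (hwc.mono (Icc_subset_Icc_left ht₀.1))
      (fun s hs => by
        have hsI : s ∈ Icc a b := ⟨ht₀.1.trans hs.1, hs.2.le⟩
        show HasDerivWithinAt w (Q' s * w s) (Ici s) s
        rw [hQ'eq s hsI]
        exact (hw s hsI).hasDerivWithinAt )
      continuousOn_const
      (fun s hs => by
        have : v s 0 = 0 := by simp [hvdef]
        rw [this]; exact (hasDerivAt_const s (0:ℝ)).hasDerivWithinAt)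
      h0
    intro t ht; exact this ht
  -- backward direction from a to t₀
  have hbwd : ∀ t ∈ Icc a t₀, w t = 0 := by
    have := ODE_solution_unique_of_mem_Icc_left (v := v) (K := K)
      (s := fun _ => (univ : Set ℝ)) (f := w) (g := fun _ => 0)
      (a := a) (b := t₀) (fun s _ => (hv s).lipschitzOnWith)
      (hwc.mono (Icc_subset_Icc_right ht₀.2))
      (fun s hs => by
        have hsI : s ∈ Icc a b := ⟨hs.1.le, hs.2.trans ht₀.2⟩
        show HasDerivWithinAt w (Q' s * w s) (Iic s) s
        rw [hQ'eq s hsI]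
        exact (hw s hsI).hasDerivWithinAt)
      (fun _ _ => trivial)
      continuousOn_const
      (fun s hs => by
        have : v s 0 = 0 := by simp [hvdef]
        rw [this]; exact (hasDerivAt_const s (0:ℝ)).hasDerivWithinAt)
      (fun _ _ => trivial)
      h0
    intro t ht; exact this ht
  intro t ht
  rcases le_total t t₀ with h | h
  · exact hbwd t ⟨ht.1, h⟩
  · exact hfwd t ⟨h, ht.2⟩

/-- If `u₀` is a root of `u⁴ + u³ + 2u² + 4u + 1`, the line `y = u₀x` is invariant
under the flow of `ẋ = x²y + y³`, `ẏ = -4x²y - y³ - xy² - x³`: a solution on an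
interval `I` with `y(t₀) = u₀x(t₀)` for some `t₀ ∈ I` satisfies `y = u₀x` on all of `I`. -/
theorem stmt_8 (u₀ : ℝ) (hu : u₀ ^ 4 + u₀ ^ 3 + 2 * u₀ ^ 2 + 4 * u₀ + 1 = 0)
    (I : Set ℝ) (hI : I.OrdConnected) (x y : ℝ → ℝ)
    (hx : ∀ t ∈ I, HasDerivAt x (x t ^ 2 * y t + y t ^ 3) t)
    (hy : ∀ t ∈ I, HasDerivAt y (-(4 * x t ^ 2 * y t) - y t ^ 3 - x t * y t ^ 2 - x t ^ 3) t)
    (t₀ : ℝ) (ht₀ : t₀ ∈ I) (h0 : y t₀ = u₀ * x t₀) :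
    ∀ t ∈ I, y t = u₀ * x t := by
  set w : ℝ → ℝ := fun t => y t - u₀ * x t with hwdef
  set Q : ℝ → ℝ := fun t => -(1 + u₀) * y t ^ 2 - (1 + u₀ + u₀ ^ 2) * x t * y t
      - (4 + 2 * u₀ + u₀ ^ 2 + u₀ ^ 3) * x t ^ 2 with hQdef
  have hw : ∀ t ∈ I, HasDerivAt w (Q t * w t) t := by
    intro t ht
    have := (hy t ht).sub ((hx t ht).const_mul u₀)
    convert this using 1
    · rfl
    · rfl
    · rfl
    simp only [hQdef, hwdef]
    linear_combination (x t ^ 3) * hu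
  have key : ∀ t ∈ I, w t = 0 := by
    intro t ht
    rcases le_total t t₀ with h | h
    · have hsub : Icc t t₀ ⊆ I := hI.out ht ht₀
      have hQc : ContinuousOn Q (Icc t t₀) := by
        intro s hs
        have h1 := ((hx s (hsub hs)).continuousAt).continuousWithinAt (s := Icc t t₀)
        have h2 := ((hy s (hsub hs)).continuousAt).continuousWithinAt (s := Icc t t₀)
        exact (((continuousWithinAt_const.mul (h2.pow 2)).sub
          ((continuousWithinAt_const.mul h1).mul h2)).sub
          (continuousWithinAt_const.mul (h1.pow 2)))
      exact linear_ode_zero Q w hQc (fun s hs => hw s (hsub hs)) t₀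
        ⟨h, le_refl t₀⟩ (by simp [hwdef, h0]) t ⟨le_refl t, h⟩
    · have hsub : Icc t₀ t ⊆ I := hI.out ht₀ ht
      have hQc : ContinuousOn Q (Icc t₀ t) := by
        intro s hs
        have h1 := ((hx s (hsub hs)).continuousAt).continuousWithinAt (s := Icc t₀ t)
        have h2 := ((hy s (hsub hs)).continuousAt).continuousWithinAt (s := Icc t₀ t)
        exact (((continuousWithinAt_const.mul (h2.pow 2)).sub
          ((continuousWithinAt_const.mul h1).mul h2)).sub
          (continuousWithinAt_const.mul (h1.pow 2)))
      exact linear_ode_zero Q w hQc (fun s hs => hw s (hsub hs)) t₀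
        ⟨le_refl t₀, h⟩ (by simp [hwdef, h0]) t ⟨h, le_refl t⟩
  intro t ht
  have := key t ht
  simp only [hwdef] at this
  linarith
end

section
/- The line {(x, y) ∈ ℝ² : y = -x} is invariant under the flow of the system ẋ = ¼x²y + y³, ẏ = -2x²y - y³ - ¼xy² - (3/2)x³: if (x, y) : I → ℝ² is a solution on an interval I with y(t₀) = -x(t₀) for some t₀ ∈ I, then y(t) = -x(t) for all t ∈ I. -/
open Set

/-- Uniqueness (forward in time) for the scalar linear ODE `w' = g w` with `w a = 0`. -/
lemma linear_ode_zero_right (a b : ℝ) (w g : ℝ → ℝ)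
    (hg : ContinuousOn g (Icc a b))
    (hw : ∀ t ∈ Icc a b, HasDerivAt w (g t * w t) t)
    (ha : w a = 0) : ∀ t ∈ Icc a b, w t = 0 := by
  rcases le_or_gt a b with hab | hab
  · obtain ⟨C, hC⟩ := (isCompact_Icc).exists_bound_of_continuousOn hg
    set K : NNReal := ⟨max C 0, le_max_right _ _⟩ with hK
    have hv : ∀ t, LipschitzOnWith K (fun u : ℝ => g t * u)
        (if t ∈ Icc a b then (univ : Set ℝ) else {0}) := by
      intro t
      by_cases h : t ∈ Icc a b
      · simp only [h, if_pos]
        rw [lipschitzOnWith_univ]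
        refine LipschitzWith.of_dist_le_mul fun u v => ?_
        have : dist (g t * u) (g t * v) = |g t| * dist u v := by
          simp [Real.dist_eq, ← mul_sub, abs_mul]
        rw [this]
        have h1 : |g t| ≤ max C 0 := le_max_of_le_left (hC t h)
        exact mul_le_mul_of_nonneg_right h1 dist_nonneg
      · simp only [h, if_neg, not_false_iff]
        intro u hu v hv
        simp only [mem_singleton_iff] at hu hv
        simp [hu, hv]
    have := ODE_solution_unique_of_mem_Icc_right (v := fun t u => g t * u)
      (s := fun t => if t ∈ Icc a b then (univ : Set ℝ) else {0}) (fun t _ => hv t)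
      (f := w) (g := fun _ => 0) (a := a) (b := b)
      (fun t ht => ((hw t ht).continuousAt).continuousWithinAt)
      (fun t ht => (hw t (Ico_subset_Icc_self ht)).hasDerivWithinAt)
      (fun t ht => by simp [Ico_subset_Icc_self ht])
      continuousOn_const
      (fun t ht => by simpa using (hasDerivAt_const t (0:ℝ)).hasDerivWithinAt)
      (fun t ht => by by_cases h : t ∈ Icc a b <;> simp [h])
      ha
    exact fun t ht => this ht
  · intro t ht
    exact absurd (ht.1.trans ht.2) (not_le.mpr hab)

/-- Uniqueness (backward in time) for the scalar linear ODE `w' = g w` with `w b = 0`. -/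
lemma linear_ode_zero_left (a b : ℝ) (w g : ℝ → ℝ)
    (hg : ContinuousOn g (Icc a b))
    (hw : ∀ t ∈ Icc a b, HasDerivAt w (g t * w t) t)
    (hb : w b = 0) : ∀ t ∈ Icc a b, w t = 0 := by
  rcases le_or_gt a b with hab | hab
  · obtain ⟨C, hC⟩ := (isCompact_Icc).exists_bound_of_continuousOn hg
    set K : NNReal := ⟨max C 0, le_max_right _ _⟩ with hK
    have hv : ∀ t, LipschitzOnWith K (fun u : ℝ => g t * u)
        (if t ∈ Icc a b then (univ : Set ℝ) else {0}) := by
      intro t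
      by_cases h : t ∈ Icc a b
      · simp only [h, if_pos]
        rw [lipschitzOnWith_univ]
        refine LipschitzWith.of_dist_le_mul fun u v => ?_
        have : dist (g t * u) (g t * v) = |g t| * dist u v := by
          simp [Real.dist_eq, ← mul_sub, abs_mul]
        rw [this]
        have h1 : |g t| ≤ max C 0 := le_max_of_le_left (hC t h)
        exact mul_le_mul_of_nonneg_right h1 dist_nonneg
      · simp only [h, if_neg, not_false_iff]
        intro u hu v hv
        simp only [mem_singleton_iff] at hu hv
        simp [hu, hv]
    have := ODE_solution_unique_of_mem_Icc_left (v := fun t u => g t * u)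
      (s := fun t => if t ∈ Icc a b then (univ : Set ℝ) else {0}) (fun t _ => hv t)
      (f := w) (g := fun _ => 0) (a := a) (b := b)
      (fun t ht => ((hw t ht).continuousAt).continuousWithinAt)
      (fun t ht => (hw t (Ioc_subset_Icc_self ht)).hasDerivWithinAt)
      (fun t ht => by simp [Ioc_subset_Icc_self ht])
      continuousOn_const
      (fun t ht => by simpa using (hasDerivAt_const t (0:ℝ)).hasDerivWithinAt)
      (fun t ht => by by_cases h : t ∈ Icc a b <;> simp [h])
      hb
    exact fun t ht => this ht
  · intro t ht
    exact absurd (ht.1.trans ht.2) (not_le.mpr hab)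

/-- The line `y = -x` is invariant under the flow of the Case 2 system
`ẋ = ¼x²y + y³`, `ẏ = -2x²y - y³ - ¼xy² - (3/2)x³`: a solution on an interval `I`
with `y(t₀) = -x(t₀)` for some `t₀ ∈ I` satisfies `y = -x` on all of `I`. -/
theorem stmt_10 (I : Set ℝ) (hI : I.OrdConnected) (x y : ℝ → ℝ)
    (hx : ∀ t ∈ I, HasDerivAt x ((1/4) * x t ^ 2 * y t + y t ^ 3) t)
    (hy : ∀ t ∈ I, HasDerivAt y
      (-(2 * x t ^ 2 * y t) - y t ^ 3 - (1/4) * x t * y t ^ 2 - (3/2) * x t ^ 3) t)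
    (t₀ : ℝ) (ht₀ : t₀ ∈ I) (h0 : y t₀ = -x t₀) :
    ∀ t ∈ I, y t = -x t := by
  set w : ℝ → ℝ := fun t => y t + x t with hw_def
  set g : ℝ → ℝ := fun t => -(1/4) * x t * (y t + 6 * x t) with hg_def
  have hw : ∀ t ∈ I, HasDerivAt w (g t * w t) t := by
    intro t ht
    have := (hy t ht).add (hx t ht)
    refine this.congr_deriv ?_
    simp only [hg_def, hw_def]
    ring
  have hw0 : w t₀ = 0 := by simp [hw_def, h0]
  have hgc : ContinuousOn g I := by
    have hxc : ContinuousOn x I := fun t ht => ((hx t ht).continuousAt).continuousWithinAt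
    have hyc : ContinuousOn y I := fun t ht => ((hy t ht).continuousAt).continuousWithinAt
    exact (continuousOn_const.mul hxc).mul (hyc.add (continuousOn_const.mul hxc))
  intro t ht
  have key : w t = 0 := by
    rcases le_total t₀ t with h | h
    · have hsub : Icc t₀ t ⊆ I := hI.out ht₀ ht
      exact linear_ode_zero_right t₀ t w g (hgc.mono hsub)
        (fun s hs => hw s (hsub hs)) hw0 t ⟨h, le_refl t⟩
    · have hsub : Icc t t₀ ⊆ I := hI.out ht ht₀
      exact linear_ode_zero_left t t₀ w g (hgc.mono hsub)
        (fun s hs => hw s (hsub hs)) hw0 t ⟨le_refl t, h⟩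
  simp only [hw_def] at key
  linarith
end

section
/- Let A be a real n×n matrix all of whose eigenvalues have strictly negative real part, and let f : ℝⁿ → ℝⁿ be continuous and locally Lipschitz with f(0) = 0 and ‖f(x)‖/‖x‖ → 0 as x → 0. Then the origin is an asymptotically stable equilibrium of ẋ = Ax + f(x): for every ε > 0 there exists δ > 0 such that every solution x(t) with ‖x(0)‖ < δ is defined for all t ≥ 0, satisfies ‖x(t)‖ < ε for all t ≥ 0, and satisfies x(t) → 0 as t → +∞. -/
open NormedSpace Matrix
open scoped Nat

attribute [local instance] Matrix.linftyOpNormedAddCommGroup Matrix.linftyOpNormedSpace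
  Matrix.linftyOpNormedRing Matrix.linftyOpNormedAlgebra

noncomputable def mvCLM {n : ℕ} (𝕜 : Type*) [RCLike 𝕜] (v : Fin n → 𝕜) :
    Matrix (Fin n) (Fin n) 𝕜 →L[𝕜] (Fin n → 𝕜) :=
  LinearMap.toContinuousLinearMap
    { toFun := fun M => M.mulVec v
      map_add' := fun M N => Matrix.add_mulVec M N v
      map_smul' := fun c M => by simp [Matrix.smul_mulVec] }

@[simp] lemma mvCLM_apply {n : ℕ} (𝕜 : Type*) [RCLike 𝕜] (v : Fin n → 𝕜)
    (M : Matrix (Fin n) (Fin n) 𝕜) : mvCLM 𝕜 v M = M.mulVec v := rfl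

lemma pow_div_factorial_le_exp (x : ℝ) (hx : 0 ≤ x) (j : ℕ) :
    x ^ j / j ! ≤ Real.exp x := by
  calc x ^ j / j ! ≤ ∑ i ∈ Finset.range (j+1), x ^ i / i !  := by
        refine Finset.single_le_sum (f := fun i => x ^ i / (i ! : ℝ)) (fun i _ => by positivity) ?_
        simp
    _ ≤ Real.exp x := Real.sum_le_exp_of_nonneg hx _

lemma exp_smul_one (z : ℂ) (n : ℕ) :
    exp (z • (1 : Matrix (Fin n) (Fin n) ℂ)) = Complex.exp z • 1 := by
  rw [← Algebra.algebraMap_eq_smul_one]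
  erw [← algebraMap_exp_comm]
  rw [← Complex.exp_eq_exp_ℂ, Algebra.algebraMap_eq_smul_one]

lemma exp_mulVec_genEig {n : ℕ} (B : Matrix (Fin n) (Fin n) ℂ) (μ : ℂ) (v : Fin n → ℂ) (k : ℕ)
    (hv : (((Matrix.toLinAlgEquiv' B) - μ • 1) ^ k) v = 0) (z : ℂ) :
    (exp (z • B)).mulVec v =
      Complex.exp (z * μ) • ∑ j ∈ Finset.range k,
        ((j ! : ℂ))⁻¹ • z ^ j • ((B - μ • 1) ^ j).mulVec v := by
  have hsplit : z • B = z • (B - μ • 1) + (z * μ) • 1 := by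
    rw [smul_sub, ← smul_smul]; abel
  have hcomm : Commute (z • (B - μ • 1)) ((z * μ) • (1 : Matrix (Fin n) (Fin n) ℂ)) :=
    ((Commute.one_right _).smul_right _).smul_left _
  rw [hsplit, Matrix.exp_add_of_commute _ _ hcomm, exp_smul_one]
  have hzero : ∀ j, k ≤ j → ((B - μ • 1) ^ j).mulVec v = 0 := by
    intro j hj
    have h1 : ((Matrix.toLinAlgEquiv' B - μ • 1) ^ j) v = 0 := by
      rw [show j = (j - k) + k by omega, pow_add, Module.End.mul_apply, hv, map_zero]
    have h2 : (Matrix.toLinAlgEquiv' ((B - μ • 1) ^ j)) v = 0 := by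
      rw [map_pow, map_sub, _root_.map_smul, _root_.map_one]; exact h1
    rw [Matrix.toLinAlgEquiv'_apply] at h2; exact h2
  have hser : (exp (z • (B - μ • 1))).mulVec v =
      ∑ j ∈ Finset.range k, ((j ! : ℂ))⁻¹ • z ^ j • ((B - μ • 1) ^ j).mulVec v := by
    have hmt := (mvCLM ℂ v).map_tsum (expSeries_summable' (𝕂 := ℂ) (z • (B - μ • 1)))
    rw [exp_eq_tsum ℂ]
    rw [show (∑' j : ℕ, (j !⁻¹ : ℂ) • (z • (B - μ • 1)) ^ j).mulVec v
        = mvCLM ℂ v (∑' j : ℕ, (j !⁻¹ : ℂ) • (z • (B - μ • 1)) ^ j) from rfl, hmt]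
    rw [tsum_eq_sum (s := Finset.range k)]
    · refine Finset.sum_congr rfl fun j _ => ?_
      rw [mvCLM_apply, smul_pow, Matrix.smul_mulVec, Matrix.smul_mulVec]
    · intro j hj
      have hk : k ≤ j := by simpa using hj
      rw [mvCLM_apply, smul_pow, Matrix.smul_mulVec, Matrix.smul_mulVec,
        hzero j hk, smul_zero, smul_zero]
  rw [Matrix.mul_smul, mul_one, Matrix.smul_mulVec, hser]

lemma complex_decay {n : ℕ} (B : Matrix (Fin n) (Fin n) ℂ)
    (hB : ∀ μ ∈ spectrum ℂ B, μ.re < 0) :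
    ∃ α C : ℝ, 0 < α ∧ 1 ≤ C ∧ ∀ t : ℝ, 0 ≤ t → ∀ v : Fin n → ℂ,
      ‖(exp ((t : ℂ) • B)).mulVec v‖ ≤ C * Real.exp (-α * t) * ‖v‖ := by
  -- choose a uniform spectral gap
  have hfin : (insert (-1 : ℝ) (Complex.re '' spectrum ℂ B)).Finite :=
    ((Matrix.finite_spectrum B).image _).insert _
  obtain ⟨m, hmS, hmax⟩ : ∃ m ∈ insert (-1 : ℝ) (Complex.re '' spectrum ℂ B),
      ∀ a ∈ insert (-1 : ℝ) (Complex.re '' spectrum ℂ B), m ≤ a → m = a := by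
    obtain ⟨m, hm⟩ := hfin.exists_maximal ⟨-1, Set.mem_insert _ _⟩
    exact ⟨m, hm.1, fun a ha h => le_antisymm h (hm.2 ha h)⟩
  have hmax' : ∀ a ∈ insert (-1 : ℝ) (Complex.re '' spectrum ℂ B), a ≤ m := by
    intro a ha
    by_contra h
    push_neg at h
    exact h.ne' (hmax a ha h.le).symm
  have hm0 : m < 0 := by
    rcases hmS with rfl | ⟨μ, hμ, rfl⟩
    · norm_num
    · exact hB μ hμ
  set α : ℝ := -m / 2 with hα_def
  have hα : 0 < α := by simp [hα_def]; linarith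
  have hspec : ∀ μ ∈ spectrum ℂ B, μ.re ≤ -(2 * α) := by
    intro μ hμ
    have := hmax' μ.re (Set.mem_insert_of_mem _ ⟨μ, hμ, rfl⟩)
    simp only [hα_def]; linarith
  -- pointwise decay
  have key : ∀ v : Fin n → ℂ, ∃ Cv : ℝ, 0 ≤ Cv ∧ ∀ t : ℝ, 0 ≤ t →
      ‖(exp ((t:ℂ) • B)).mulVec v‖ ≤ Cv * Real.exp (-α * t) := by
    intro v
    have hv : v ∈ ⨆ μ : ℂ, Module.End.maxGenEigenspace (Matrix.toLinAlgEquiv' B) μ := by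
      rw [Module.End.iSup_maxGenEigenspace_eq_top]; trivial
    refine Submodule.iSup_induction _ (motive := fun w => ∃ Cv : ℝ, 0 ≤ Cv ∧ ∀ t : ℝ, 0 ≤ t →
      ‖(exp ((t:ℂ) • B)).mulVec w‖ ≤ Cv * Real.exp (-α * t)) hv ?_ ?_ ?_
    · -- elements of a generalized eigenspace
      intro μ w hw
      rcases eq_or_ne w 0 with rfl | hw0
      · exact ⟨0, le_rfl, fun t ht => by simp [Matrix.mulVec_zero]⟩
      obtain ⟨k, hk⟩ := (Module.End.mem_maxGenEigenspace _ _ _).mp hw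
      have hμspec : μ ∈ spectrum ℂ B := by
        have hgen : Module.End.HasGenEigenvalue (Matrix.toLinAlgEquiv' B) μ k := by
          rw [Module.End.hasGenEigenvalue_iff]
          refine Submodule.ne_bot_iff _ |>.mpr ⟨w, ?_, hw0⟩
          exact Module.End.mem_genEigenspace_nat.mpr (LinearMap.mem_ker.mpr hk)
        have := Module.End.hasEigenvalue_iff_mem_spectrum.mp
          (Module.End.hasEigenvalue_of_hasGenEigenvalue hgen)
        rwa [AlgEquiv.spectrum_eq (Matrix.toLinAlgEquiv' (R := ℂ) (n := Fin n)) B] at this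
      have hre : μ.re ≤ -(2 * α) := hspec μ hμspec
      refine ⟨∑ j ∈ Finset.range k, ‖((B - μ • 1) ^ j).mulVec w‖ / α ^ j,
        Finset.sum_nonneg fun j _ => by positivity, fun t ht => ?_⟩
      rw [exp_mulVec_genEig B μ w k hk, norm_smul]
      have habs : ‖Complex.exp ((t:ℂ) * μ)‖ = Real.exp (t * μ.re) := by
        rw [Complex.norm_exp]
        congr 1
        simp [Complex.mul_re]
      rw [habs]
      calc Real.exp (t * μ.re) * ‖∑ j ∈ Finset.range k,
            ((j ! : ℂ))⁻¹ • (t:ℂ) ^ j • ((B - μ • 1) ^ j).mulVec w‖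
          ≤ Real.exp (t * μ.re) * ∑ j ∈ Finset.range k,
            (t ^ j / j !) * ‖((B - μ • 1) ^ j).mulVec w‖ := by
            refine mul_le_mul_of_nonneg_left ?_ (Real.exp_nonneg _)
            refine (norm_sum_le _ _).trans (Finset.sum_le_sum fun j _ => ?_)
            have heq : ‖((j ! : ℂ))⁻¹ • (t:ℂ) ^ j • ((B - μ • 1) ^ j).mulVec w‖
                = (t ^ j / j !) * ‖((B - μ • 1) ^ j).mulVec w‖ := by
              rw [norm_smul, norm_smul, norm_pow, norm_inv, Complex.norm_natCast,
                Complex.norm_real, Real.norm_of_nonneg ht]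
              ring
            exact le_of_eq heq
        _ = ∑ j ∈ Finset.range k, (t ^ j / j !) * Real.exp (t * μ.re)
              * ‖((B - μ • 1) ^ j).mulVec w‖ := by
            rw [Finset.mul_sum]; refine Finset.sum_congr rfl fun j _ => by ring
        _ ≤ ∑ j ∈ Finset.range k, (Real.exp (-α * t) / α ^ j)
              * ‖((B - μ • 1) ^ j).mulVec w‖ := by
            refine Finset.sum_le_sum fun j _ => ?_
            refine mul_le_mul_of_nonneg_right ?_ (norm_nonneg _)
            have h1 : t ^ j / j ! ≤ Real.exp (α * t) / α ^ j := by
              have := pow_div_factorial_le_exp (α * t) (by positivity) j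
              rw [mul_pow] at this
              rw [div_le_div_iff₀ (by positivity) (by positivity)]
              rw [div_le_iff₀ (by positivity)] at this
              calc t ^ j * α ^ j = α ^ j * t ^ j := by ring
                _ ≤ Real.exp (α * t) * j ! := this
            have h2 : Real.exp (t * μ.re) ≤ Real.exp (-(2*α) * t) := by
              apply Real.exp_le_exp.mpr
              calc t * μ.re ≤ t * (-(2*α)) := by nlinarith
                _ = -(2*α) * t := by ring
            calc t ^ j / j ! * Real.exp (t * μ.re)
                ≤ (Real.exp (α * t) / α ^ j) * Real.exp (-(2*α) * t) := by
                  apply mul_le_mul h1 h2 (Real.exp_nonneg _) (by positivity)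
              _ = Real.exp (-α * t) / α ^ j := by
                  rw [div_mul_eq_mul_div, ← Real.exp_add]
                  ring_nf
        _ = (∑ j ∈ Finset.range k, ‖((B - μ • 1) ^ j).mulVec w‖ / α ^ j)
              * Real.exp (-α * t) := by
            rw [Finset.sum_mul]; refine Finset.sum_congr rfl fun j _ => by ring
    · exact ⟨0, le_rfl, fun t ht => by simp [Matrix.mulVec_zero]⟩
    · rintro w₁ w₂ ⟨C₁, hC₁, h₁⟩ ⟨C₂, hC₂, h₂⟩
      refine ⟨C₁ + C₂, by linarith, fun t ht => ?_⟩
      rw [Matrix.mulVec_add, add_mul]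
      exact (norm_add_le _ _).trans (add_le_add (h₁ t ht) (h₂ t ht))
  -- uniformize over the standard basis
  choose Cv hCv0 hCv using key
  refine ⟨α, 1 + ∑ i, Cv (Pi.single i 1), hα,
    le_add_of_nonneg_right (Finset.sum_nonneg fun i _ => hCv0 _), fun t ht v => ?_⟩
  have hdecomp : (exp ((t:ℂ) • B)).mulVec v
      = ∑ i, v i • (exp ((t:ℂ) • B)).mulVec (Pi.single i 1) := by
    have hv : v = ∑ i, v i • (Pi.single i 1 : Fin n → ℂ) := by
      ext j
      simp [Pi.single_apply, Finset.sum_apply]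
    conv_lhs => rw [hv]
    rw [show (exp ((t:ℂ) • B)).mulVec = (exp ((t:ℂ) • B)).mulVecLin from rfl]
    rw [map_sum]
    exact Finset.sum_congr rfl fun i _ => by rw [LinearMap.map_smul]
  rw [hdecomp]
  calc ‖∑ i, v i • (exp ((t:ℂ) • B)).mulVec (Pi.single i 1)‖
      ≤ ∑ i, ‖v i‖ * ‖(exp ((t:ℂ) • B)).mulVec (Pi.single i 1)‖ := by
        refine (norm_sum_le _ _).trans (Finset.sum_le_sum fun i _ => ?_)
        rw [norm_smul]
    _ ≤ ∑ i, ‖v‖ * (Cv (Pi.single i 1) * Real.exp (-α * t)) := by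
        refine Finset.sum_le_sum fun i _ => ?_
        exact mul_le_mul (norm_le_pi_norm v i) (hCv _ t ht) (norm_nonneg _) (norm_nonneg _)
    _ = (∑ i, Cv (Pi.single i 1)) * Real.exp (-α * t) * ‖v‖ := by
        rw [← Finset.mul_sum, ← Finset.sum_mul]; ring
    _ ≤ (1 + ∑ i, Cv (Pi.single i 1)) * Real.exp (-α * t) * ‖v‖ := by
        have h1 : (0:ℝ) ≤ Real.exp (-α * t) * ‖v‖ := by positivity
        nlinarith [Finset.sum_nonneg fun i (_ : i ∈ Finset.univ) => hCv0 (Pi.single i (1:ℂ))]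

lemma norm_coe_complex {n : ℕ} (v : Fin n → ℝ) : ‖(fun i => (v i : ℂ))‖ = ‖v‖ := by
  rw [Pi.norm_def, Pi.norm_def]
  congr 1
  refine Finset.sup_congr rfl fun i _ => ?_
  simp [nnnorm]

lemma mulVec_map_coe {n : ℕ} (M : Matrix (Fin n) (Fin n) ℝ) (v : Fin n → ℝ) :
    (M.map (fun a => (a : ℂ))).mulVec (fun i => (v i : ℂ)) = fun i => ((M.mulVec v) i : ℂ) := by
  ext i
  simp [Matrix.mulVec, dotProduct, Matrix.map_apply]

lemma real_decay {n : ℕ} (A : Matrix (Fin n) (Fin n) ℝ)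
    (hA : ∀ μ ∈ spectrum ℂ (A.map (fun a => (a : ℂ))), μ.re < 0) :
    ∃ α C : ℝ, 0 < α ∧ 1 ≤ C ∧ ∀ t : ℝ, 0 ≤ t → ∀ v : Fin n → ℝ,
      ‖(exp (t • A)).mulVec v‖ ≤ C * Real.exp (-α * t) * ‖v‖ := by
  obtain ⟨α, C, hα, hC, h⟩ := complex_decay (A.map (fun a => (a:ℂ))) hA
  refine ⟨α, C, hα, hC, fun t ht v => ?_⟩
  have hmap : (exp (t • A)).map (fun a => (a:ℂ))
      = exp ((t:ℂ) • A.map (fun a => (a:ℂ))) := by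
    have hcont : Continuous fun M : Matrix (Fin n) (Fin n) ℝ =>
        (RingHom.mapMatrix (algebraMap ℝ ℂ)) M := by
      exact Continuous.matrix_map continuous_id Complex.continuous_ofReal
    have h1 := map_exp (RingHom.mapMatrix (algebraMap ℝ ℂ) :
        Matrix (Fin n) (Fin n) ℝ →+* Matrix (Fin n) (Fin n) ℂ) hcont (t • A)
    have h2 : (RingHom.mapMatrix (algebraMap ℝ ℂ)) (t • A) = (t:ℂ) • A.map (fun a => (a:ℂ)) := by
      ext i j
      simp only [RingHom.mapMatrix_apply, Matrix.map_apply, Matrix.smul_apply, smul_eq_mul,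
        Complex.real_smul, Algebra.algebraMap_self, RingHom.id_apply, Complex.coe_algebraMap]
      push_cast
      ring
    have h3 : (exp : Matrix (Fin n) (Fin n) ℂ → _) = exp := rfl
    calc (exp (t • A)).map (fun a => (a:ℂ))
        = (RingHom.mapMatrix (algebraMap ℝ ℂ)) (exp (t • A)) := rfl
      _ = exp ((RingHom.mapMatrix (algebraMap ℝ ℂ)) (t • A)) := h1
      _ = exp ((t:ℂ) • A.map (fun a => (a:ℂ))) := by rw [h2, h3]
  calc ‖(exp (t • A)).mulVec v‖
      = ‖(fun i => (((exp (t • A)).mulVec v) i : ℂ))‖ := (norm_coe_complex _).symm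
    _ = ‖(exp ((t:ℂ) • A.map (fun a => (a:ℂ)))).mulVec (fun i => (v i : ℂ))‖ := by
        rw [← mulVec_map_coe, hmap]
    _ ≤ C * Real.exp (-α * t) * ‖(fun i => (v i : ℂ))‖ := h t ht _
    _ = C * Real.exp (-α * t) * ‖v‖ := by rw [norm_coe_complex]

lemma gronwall_integral {u : ℝ → ℝ} {T K a : ℝ} (hT : 0 ≤ T) (ha : 0 ≤ a)
    (hu : ContinuousOn u (Set.Icc 0 T)) (hK : 0 ≤ K)
    (h : ∀ τ ∈ Set.Icc (0:ℝ) T, u τ ≤ a + K * ∫ s in (0:ℝ)..τ, u s) :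
    ∀ τ ∈ Set.Icc (0:ℝ) T, u τ ≤ a * Real.exp (K * τ) := by
  set w : ℝ → ℝ := fun τ => a + K * ∫ s in (0:ℝ)..τ, u s with hw_def
  set g : ℝ → ℝ := fun τ => Real.exp (-K * τ) * w τ with hg_def
  have hwcont : ContinuousOn w (Set.Icc 0 T) := by
    apply continuousOn_const.add
    apply continuousOn_const.mul
    have h1 : MeasureTheory.IntegrableOn u (Set.uIcc 0 T) MeasureTheory.volume := by
      rw [Set.uIcc_of_le hT]
      exact hu.integrableOn_Icc
    have := intervalIntegral.continuousOn_primitive_interval h1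
    rwa [Set.uIcc_of_le hT] at this
  have hgcont : ContinuousOn g (Set.Icc 0 T) :=
    ((Real.continuous_exp.comp (continuous_const.mul continuous_id)).continuousOn).mul hwcont
  have hderiv : ∀ τ ∈ Set.Ioo (0:ℝ) T, HasDerivAt w (K * u τ) τ := by
    intro τ hτ
    have hmem : Set.Icc (0:ℝ) T ∈ nhds τ := Icc_mem_nhds hτ.1 hτ.2
    have hint : IntervalIntegrable u MeasureTheory.volume 0 τ := by
      apply ContinuousOn.intervalIntegrable
      apply hu.mono
      rw [Set.uIcc_of_le hτ.1.le]
      exact Set.Icc_subset_Icc le_rfl hτ.2.le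
    have hmeas : StronglyMeasurableAtFilter u (nhds τ) MeasureTheory.volume :=
      ⟨Set.Icc 0 T, hmem, (hu.aestronglyMeasurable measurableSet_Icc)⟩
    have h1 : HasDerivAt (fun τ => ∫ s in (0:ℝ)..τ, u s) (u τ) τ :=
      intervalIntegral.integral_hasDerivAt_right hint hmeas (hu.continuousAt hmem)
    simpa [hw_def] using (h1.const_mul K).const_add a
  have hganti : AntitoneOn g (Set.Icc 0 T) := by
    apply antitoneOn_of_deriv_nonpos (convex_Icc 0 T) hgcont
    · intro τ hτ
      rw [interior_Icc] at hτ
      exact ((((hasDerivAt_id τ).const_mul (-K)).exp.mul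
        (hderiv τ hτ))).differentiableAt.differentiableWithinAt
    · intro τ hτ
      rw [interior_Icc] at hτ
      have hd : HasDerivAt g (-K * Real.exp (-K * τ) * w τ + Real.exp (-K * τ) * (K * u τ)) τ := by
        have he : HasDerivAt (fun τ => Real.exp (-K * τ)) (-K * Real.exp (-K * τ)) τ := by
          have h' := ((hasDerivAt_id τ).const_mul (-K)).exp
          simp only [id] at h'
          convert h' using 1
          ring
        exact he.mul (hderiv τ hτ)
      rw [hd.deriv]
      have huw : u τ ≤ w τ := h τ ⟨hτ.1.le, hτ.2.le⟩
      have : Real.exp (-K * τ) * (K * u τ) ≤ Real.exp (-K * τ) * (K * w τ) := by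
        apply mul_le_mul_of_nonneg_left _ (Real.exp_nonneg _)
        exact mul_le_mul_of_nonneg_left huw hK
      nlinarith [Real.exp_nonneg (-K * τ)]
  intro τ hτ
  have h0 : g τ ≤ g 0 := hganti (Set.left_mem_Icc.mpr hT) hτ hτ.1
  have hg0 : g 0 = a := by simp [hg_def, hw_def]
  have : Real.exp (-K * τ) * w τ ≤ a := by rw [← hg0]; exact h0
  have hwτ : w τ ≤ a * Real.exp (K * τ) := by
    have hmul : Real.exp (K * τ) * Real.exp (-K * τ) = 1 := by
      rw [← Real.exp_add]
      simp
    nlinarith [Real.exp_pos (K * τ), Real.exp_pos (-K * τ)]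
  exact (h τ hτ).trans hwτ

noncomputable def mulVecL (n : ℕ) :
    Matrix (Fin n) (Fin n) ℝ →L[ℝ] ((Fin n → ℝ) →L[ℝ] (Fin n → ℝ)) :=
  LinearMap.toContinuousLinearMap
    { toFun := fun M => LinearMap.toContinuousLinearMap M.mulVecLin
      map_add' := fun M N => ContinuousLinearMap.ext fun v => Matrix.add_mulVec M N v
      map_smul' := fun c M => ContinuousLinearMap.ext fun v => Matrix.smul_mulVec c M v }

@[simp] lemma mulVecL_apply {n : ℕ} (M : Matrix (Fin n) (Fin n) ℝ) (v : Fin n → ℝ) :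
    mulVecL n M v = M.mulVec v := rfl

lemma continuousAt_clm_apply' {E F : Type*} [NormedAddCommGroup E] [NormedSpace ℝ E]
    [NormedAddCommGroup F] [NormedSpace ℝ F] {f : ℝ → (E →L[ℝ] F)} {g : ℝ → E} {s : ℝ}
    (hf : ContinuousAt f s) (hg : ContinuousAt g s) :
    ContinuousAt (fun y => f y (g y)) s :=
  hf.clm_apply hg

lemma duhamel_bound {n : ℕ} (A : Matrix (Fin n) (Fin n) ℝ) {α C : ℝ}
    (hα : 0 < α) (hC : 1 ≤ C)
    (hdecay : ∀ t : ℝ, 0 ≤ t → ∀ v : Fin n → ℝ,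
      ‖(exp (t • A)).mulVec v‖ ≤ C * Real.exp (-α * t) * ‖v‖)
    (f : (Fin n → ℝ) → (Fin n → ℝ)) (hfc : Continuous f)
    (x : ℝ → (Fin n → ℝ))
    (hx : ∀ t ≥ (0:ℝ), HasDerivAt x (A.mulVec (x t) + f (x t)) t)
    {T : ℝ} (hT : 0 ≤ T)
    (hfb : ∀ s ∈ Set.Icc (0:ℝ) T, ‖f (x s)‖ ≤ (α / (2*C)) * ‖x s‖) :
    ‖x T‖ ≤ C * ‖x 0‖ * Real.exp (-(α/2) * T) := by
  have hCpos : (0:ℝ) < C := lt_of_lt_of_le one_pos hC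
  set k : ℝ := α / (2*C) with hk_def
  set E : ℝ → Matrix (Fin n) (Fin n) ℝ := fun s => exp (s • (-A)) with hE_def
  have hEcont : Continuous E := by
    exact exp_continuous.comp (continuous_id.smul continuous_const)
  have hxc : ∀ s : ℝ, 0 ≤ s → ContinuousAt x s := fun s hs => (hx s hs).continuousAt
  -- derivative of the integrating-factor transform
  have hyd : ∀ s : ℝ, 0 ≤ s →
      HasDerivAt (fun s => (E s).mulVec (x s)) ((E s).mulVec (f (x s))) s := by
    intro s hs
    have h1 : HasDerivAt E (E s * (-A)) s := hasDerivAt_exp_smul_const (-A) s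
    have hE' : HasDerivAt (fun s => mulVecL n (E s)) (mulVecL n (E s * (-A))) s :=
      ((mulVecL n).hasFDerivAt.comp_hasDerivAt s h1)
    have h2 := hE'.clm_apply (hx s hs)
    convert h2 using 1
    show (E s).mulVec (f (x s))
      = (E s * (-A)).mulVec (x s) + (E s).mulVec (A.mulVec (x s) + f (x s))
    rw [← Matrix.mulVec_mulVec, Matrix.neg_mulVec, Matrix.mulVec_neg, Matrix.mulVec_add]
    abel
    all_goals rfl
  -- continuity of the Duhamel integrand
  have hgc : ∀ s : ℝ, 0 ≤ s → ContinuousAt (fun s => (E s).mulVec (f (x s))) s := by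
    intro s hs
    have h1 : ContinuousAt (fun s => mulVecL n (E s)) s :=
      ((mulVecL n).continuous.comp hEcont).continuousAt
    have h2 : ContinuousAt (fun s => f (x s)) s := hfc.continuousAt.comp (hxc s hs)
    exact continuousAt_clm_apply' h1 h2
  have hgint : ∀ τ : ℝ, 0 ≤ τ →
      IntervalIntegrable (fun s => (E s).mulVec (f (x s))) MeasureTheory.volume 0 τ := by
    intro τ hτ
    apply ContinuousOn.intervalIntegrable
    intro s hsm
    rw [Set.uIcc_of_le hτ] at hsm
    exact (hgc s hsm.1).continuousWithinAt
  have hE0 : E 0 = 1 := by rw [hE_def]; simp [exp_zero]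
  have hEinv : ∀ τ : ℝ, exp (τ • A) * E τ = 1 := by
    intro τ
    rw [hE_def]; beta_reduce
    have hcomm : Commute (τ • A) (τ • (-A)) :=
      (((Commute.refl A).neg_right).smul_left τ).smul_right τ
    rw [← Matrix.exp_add_of_commute _ _ hcomm]
    rw [show τ • A + τ • (-A) = 0 by rw [smul_neg]; abel]
    exact exp_zero
  have hEmul : ∀ τ s : ℝ, exp (τ • A) * E s = exp ((τ - s) • A) := by
    intro τ s
    rw [hE_def]; beta_reduce
    have hcomm : Commute (τ • A) (s • (-A)) :=
      (((Commute.refl A).neg_right).smul_left τ).smul_right s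
    rw [← Matrix.exp_add_of_commute _ _ hcomm]
    congr 1
    rw [smul_neg, sub_smul]
    abel
  -- the variation of constants formula
  have hvoc : ∀ τ : ℝ, 0 ≤ τ →
      x τ = (exp (τ • A)).mulVec (x 0)
        + ∫ s in (0:ℝ)..τ, (exp ((τ - s) • A)).mulVec (f (x s)) := by
    intro τ hτ
    have hftc : (∫ s in (0:ℝ)..τ, (E s).mulVec (f (x s)))
        = (E τ).mulVec (x τ) - (E 0).mulVec (x 0) := by
      apply intervalIntegral.integral_eq_sub_of_hasDerivAt
      · intro s hsm
        rw [Set.uIcc_of_le hτ] at hsm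
        exact hyd s hsm.1
      · exact hgint τ hτ
    have hxτ : x τ = (exp (τ • A)).mulVec ((E τ).mulVec (x τ)) := by
      rw [Matrix.mulVec_mulVec, hEinv, Matrix.one_mulVec]
    have hkey : (E τ).mulVec (x τ)
        = x 0 + ∫ s in (0:ℝ)..τ, (E s).mulVec (f (x s)) := by
      rw [hftc, hE0, Matrix.one_mulVec]; abel
    calc x τ = (exp (τ • A)).mulVec ((E τ).mulVec (x τ)) := hxτ
      _ = (exp (τ • A)).mulVec (x 0 + ∫ s in (0:ℝ)..τ, (E s).mulVec (f (x s))) := by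
          rw [← hkey]
      _ = (exp (τ • A)).mulVec (x 0)
          + (mulVecL n (exp (τ • A))) (∫ s in (0:ℝ)..τ, (E s).mulVec (f (x s))) := by
          rw [Matrix.mulVec_add]; rfl
      _ = (exp (τ • A)).mulVec (x 0)
          + ∫ s in (0:ℝ)..τ, (exp ((τ - s) • A)).mulVec (f (x s)) := by
          congr 1
          rw [← ContinuousLinearMap.intervalIntegral_comp_comm _ (hgint τ hτ)]
          refine intervalIntegral.integral_congr fun s hsm => ?_
          show (exp (τ • A)).mulVec ((E s).mulVec (f (x s))) = _
          rw [Matrix.mulVec_mulVec, hEmul]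
  -- the integral inequality for u s = e^{αs}‖x s‖
  set u : ℝ → ℝ := fun s => Real.exp (α * s) * ‖x s‖ with hu_def
  have hucont : ContinuousOn u (Set.Icc 0 T) := by
    intro s hsm
    exact ((Real.continuous_exp.comp (continuous_const.mul continuous_id)).continuousAt.mul
      ((hxc s hsm.1).norm)).continuousWithinAt
  have hui : ∀ τ ∈ Set.Icc (0:ℝ) T, u τ ≤ C * ‖x 0‖ + (α/2) * ∫ s in (0:ℝ)..τ, u s := by
    intro τ hτm
    obtain ⟨hτ0, hτT⟩ := hτm
    have hnorm_int : ‖∫ s in (0:ℝ)..τ, (exp ((τ - s) • A)).mulVec (f (x s))‖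
        ≤ ∫ s in (0:ℝ)..τ, C * Real.exp (-α * (τ - s)) * (k * ‖x s‖) := by
      refine (intervalIntegral.norm_integral_le_integral_norm hτ0).trans ?_
      apply intervalIntegral.integral_mono_on hτ0
      · -- integrability of the norm
        apply ContinuousOn.intervalIntegrable
        intro s hsm
        rw [Set.uIcc_of_le hτ0] at hsm
        have h1 : ContinuousAt (fun s => (exp ((τ - s) • A)).mulVec (f (x s))) s := by
          have hec : ContinuousAt (fun s => mulVecL n (exp ((τ - s) • A))) s := by
            exact ((mulVecL n).continuous.comp (exp_continuous.comp
              ((continuous_const.sub continuous_id).smul continuous_const))).continuousAt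
          exact continuousAt_clm_apply' hec (hfc.continuousAt.comp (hxc s hsm.1))
        exact h1.norm.continuousWithinAt
      · apply ContinuousOn.intervalIntegrable
        intro s hsm
        rw [Set.uIcc_of_le hτ0] at hsm
        have : ContinuousAt (fun s => C * Real.exp (-α * (τ - s)) * (k * ‖x s‖)) s := by
          exact ((continuous_const.mul (Real.continuous_exp.comp
            (continuous_const.mul (continuous_const.sub continuous_id)))).continuousAt.mul
            (((hxc s hsm.1).norm).const_mul k))
        exact this.continuousWithinAt
      · intro s hsm
        have hs0 : (0:ℝ) ≤ s := hsm.1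
        have hsτ : s ≤ τ := hsm.2
        calc ‖(exp ((τ - s) • A)).mulVec (f (x s))‖
            ≤ C * Real.exp (-α * (τ - s)) * ‖f (x s)‖ :=
              hdecay (τ - s) (by linarith) _
          _ ≤ C * Real.exp (-α * (τ - s)) * (k * ‖x s‖) := by
              refine mul_le_mul_of_nonneg_left ?_ (by positivity)
              exact hfb s ⟨hs0, by linarith⟩
    have hxτ_bound : ‖x τ‖ ≤ C * Real.exp (-α * τ) * ‖x 0‖
        + ∫ s in (0:ℝ)..τ, C * Real.exp (-α * (τ - s)) * (k * ‖x s‖) := by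
      rw [hvoc τ hτ0]
      refine (norm_add_le _ _).trans (add_le_add (hdecay τ hτ0 _) hnorm_int)
    -- multiply through by e^{ατ}
    have hrw : (∫ s in (0:ℝ)..τ, C * Real.exp (-α * (τ - s)) * (k * ‖x s‖))
        = (C * k * Real.exp (-α * τ)) * ∫ s in (0:ℝ)..τ, u s := by
      rw [← intervalIntegral.integral_const_mul]
      refine intervalIntegral.integral_congr fun s hsm => ?_
      rw [hu_def]
      simp only []
      rw [show -α * (τ - s) = -α * τ + α * s by ring, Real.exp_add]
      ring
    have hCk : C * k = α / 2 := by
      rw [hk_def]; field_simp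
    rw [hrw, hCk] at hxτ_bound
    have hepos : (0:ℝ) < Real.exp (α * τ) := Real.exp_pos _
    have hmul1 : Real.exp (α * τ) * Real.exp (-α * τ) = 1 := by
      rw [← Real.exp_add]; simp
    have := mul_le_mul_of_nonneg_left hxτ_bound hepos.le
    calc u τ = Real.exp (α * τ) * ‖x τ‖ := rfl
      _ ≤ Real.exp (α * τ) * (C * Real.exp (-α * τ) * ‖x 0‖
          + α / 2 * Real.exp (-α * τ) * ∫ s in (0:ℝ)..τ, u s) := this
      _ = (Real.exp (α * τ) * Real.exp (-α * τ)) * C * ‖x 0‖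
          + (Real.exp (α * τ) * Real.exp (-α * τ)) * (α/2) * ∫ s in (0:ℝ)..τ, u s := by ring
      _ = C * ‖x 0‖ + (α/2) * ∫ s in (0:ℝ)..τ, u s := by rw [hmul1]; ring
  -- apply Grönwall
  have hfin := gronwall_integral hT (mul_nonneg hCpos.le (norm_nonneg _)) hucont
    (by linarith : (0:ℝ) ≤ α/2) hui T (Set.right_mem_Icc.mpr hT)
  -- unfold u T
  have hepos : (0:ℝ) < Real.exp (α * T) := Real.exp_pos _
  have huT : Real.exp (α * T) * ‖x T‖ ≤ C * ‖x 0‖ * Real.exp (α / 2 * T) := hfin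
  have hmul : Real.exp (α / 2 * T) = Real.exp (-(α/2) * T) * Real.exp (α * T) := by
    rw [← Real.exp_add]; ring_nf
  rw [hmul, ← mul_assoc, mul_comm (Real.exp (α * T)) (‖x T‖)] at huT
  exact le_of_mul_le_mul_right huT hepos



/-- Linearized (asymptotic) stability: if all eigenvalues of the real `n×n` matrix `A`
have strictly negative real part, and `f` is continuous, locally Lipschitz, with
`f(0) = 0` and `‖f(x)‖/‖x‖ → 0` as `x → 0`, then the origin is asymptotically stable
for `ẋ = Ax + f(x)`. -/
theorem stmt_13 (n : ℕ) (A : Matrix (Fin n) (Fin n) ℝ)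
    (hA : ∀ μ ∈ spectrum ℂ (A.map (fun a => (a : ℂ))), μ.re < 0)
    (f : (Fin n → ℝ) → (Fin n → ℝ))
    (hfc : Continuous f) (hfl : LocallyLipschitz f) (hf0 : f 0 = 0)
    (hsmall : Filter.Tendsto (fun x => ‖f x‖ / ‖x‖)
      (nhdsWithin 0 {(0 : Fin n → ℝ)}ᶜ) (nhds 0)) :
    ∀ ε > 0, ∃ δ > 0, ∀ x : ℝ → (Fin n → ℝ),
      (∀ t ≥ (0 : ℝ), HasDerivAt x (A.mulVec (x t) + f (x t)) t) →
      ‖x 0‖ < δ →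
      (∀ t ≥ (0 : ℝ), ‖x t‖ < ε) ∧ Filter.Tendsto x Filter.atTop (nhds 0) := by
  obtain ⟨α, C, hα, hC, hdecay⟩ := real_decay A hA
  have hCpos : (0:ℝ) < C := lt_of_lt_of_le one_pos hC
  set k : ℝ := α / (2*C) with hk_def
  have hk : 0 < k := div_pos hα (by linarith)
  intro ε hε
  -- smallness radius
  obtain ⟨r, hr, hball⟩ : ∃ r > 0, ∀ v : Fin n → ℝ, v ≠ 0 → ‖v‖ < r → ‖f v‖ / ‖v‖ < k := by
    obtain ⟨δ, hδ, h⟩ := Metric.tendsto_nhdsWithin_nhds.mp hsmall k hk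
    refine ⟨δ, hδ, fun v hv hvr => ?_⟩
    have := h (x := v) (Set.mem_compl_singleton_iff.mpr hv)
      (by rwa [dist_zero_right])
    rwa [Real.dist_eq, sub_zero, abs_of_nonneg (by positivity)] at this
  have hfr : ∀ v : Fin n → ℝ, ‖v‖ < r → ‖f v‖ ≤ k * ‖v‖ := by
    intro v hvr
    rcases eq_or_ne v 0 with rfl | hv
    · simp [hf0]
    · have hpos : 0 < ‖v‖ := norm_pos_iff.mpr hv
      have := hball v hv hvr
      rw [div_lt_iff₀ hpos] at this
      linarith
  set ρ : ℝ := min r ε with hρ_def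
  have hρ : 0 < ρ := lt_min hr hε
  have hρr : ρ ≤ r := min_le_left _ _
  have hρε : ρ ≤ ε := min_le_right _ _
  refine ⟨ρ / (2*C), by positivity, fun x hx hx0 => ?_⟩
  have hδle : ρ / (2*C) ≤ ρ/2 := by
    apply div_le_div_of_nonneg_left hρ.le (by norm_num)
    linarith
  have hxc : ∀ s : ℝ, 0 ≤ s → ContinuousAt x s := fun s hs => (hx s hs).continuousAt
  -- the solution stays below ρ/2
  have hgood : ∀ t : ℝ, 0 ≤ t → ‖x t‖ < ρ/2 := by
    by_contra hbad
    push_neg at hbad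
    obtain ⟨t₀, ht₀0, ht₀⟩ := hbad
    set D : Set ℝ := {t | 0 ≤ t ∧ ρ/2 ≤ ‖x t‖} with hD_def
    have hDne : D.Nonempty := ⟨t₀, ht₀0, ht₀⟩
    have hbdd : BddBelow D := ⟨0, fun t ht => ht.1⟩
    -- a globally continuous version of x
    set y : ℝ → (Fin n → ℝ) := fun t => x (max t 0) with hy_def
    have hyc : Continuous y := by
      rw [continuous_iff_continuousAt]
      intro t
      have hg : Continuous fun t : ℝ => max t 0 := continuous_id.max continuous_const
      exact ContinuousAt.comp (hxc (max t 0) (le_max_right _ _)) hg.continuousAt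
    have hyx : ∀ t : ℝ, 0 ≤ t → y t = x t := fun t ht => by
      simp only [hy_def]; rw [max_eq_left ht]
    have hDclosed : IsClosed D := by
      have : D = {t : ℝ | 0 ≤ t} ∩ {t : ℝ | ρ/2 ≤ ‖y t‖} := by
        ext t
        constructor
        · rintro ⟨h1, h2⟩
          refine ⟨h1, ?_⟩
          show ρ/2 ≤ ‖y t‖
          rwa [hyx t h1]
        · rintro ⟨h1, h2⟩
          have h2' : ρ/2 ≤ ‖y t‖ := h2
          rw [hyx t h1] at h2'
          exact ⟨h1, h2'⟩
      rw [this]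
      exact isClosed_Ici.inter (isClosed_le continuous_const hyc.norm)
    set u : ℝ := sInf D with hu_def
    have huD : u ∈ D := hDclosed.csInf_mem hDne hbdd
    have hu0 : 0 ≤ u := huD.1
    have hbefore : ∀ s : ℝ, 0 ≤ s → s < u → ‖x s‖ < ρ/2 := by
      intro s hs0 hsu
      by_contra hcon
      push_neg at hcon
      exact absurd (csInf_le hbdd ⟨hs0, hcon⟩) (not_le.mpr hsu)
    have hx0' : ‖x 0‖ < ρ/2 := lt_of_lt_of_le hx0 hδle
    have hupos : 0 < u := by
      rcases hu0.lt_or_eq with h | h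
      · exact h
      · exfalso
        have h2 := huD.2
        rw [← h] at h2
        linarith
    have hxu_le : ‖x u‖ ≤ ρ/2 := by
      have htend : Filter.Tendsto (fun s => ‖y s‖) (nhdsWithin u (Set.Iio u)) (nhds ‖y u‖) :=
        (hyc.norm.continuousAt).continuousWithinAt
      have hev : ∀ᶠ s in nhdsWithin u (Set.Iio u), ‖y s‖ ≤ ρ/2 := by
        filter_upwards [self_mem_nhdsWithin] with s hs
        rcases le_or_gt 0 s with h0 | h0
        · rw [hyx s h0]; exact (hbefore s h0 hs).le
        · rw [hy_def]; simp only [max_eq_right h0.le]; exact hx0'.le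
      have := le_of_tendsto htend hev
      rwa [hyx u hu0] at this
    have hfb : ∀ s ∈ Set.Icc (0:ℝ) u, ‖f (x s)‖ ≤ k * ‖x s‖ := by
      intro s hs
      rcases hs.2.lt_or_eq with h | h
      · exact hfr _ (by linarith [hbefore s hs.1 h])
      · rw [h]; exact hfr _ (by linarith)
    have := duhamel_bound A hα hC hdecay f hfc x hx hu0 hfb
    have hle1 : Real.exp (-(α/2) * u) ≤ 1 := by
      apply Real.exp_le_one_iff.mpr  -- may need adjusting
      nlinarith
    have hcontr : ‖x u‖ < ρ/2 := by
      calc ‖x u‖ ≤ C * ‖x 0‖ * Real.exp (-(α/2) * u) := this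
        _ ≤ C * ‖x 0‖ := by
            have h0 : 0 ≤ C * ‖x 0‖ := mul_nonneg hCpos.le (norm_nonneg _)
            simpa using mul_le_mul_of_nonneg_left hle1 h0
        _ < C * (ρ / (2*C)) := by
            apply mul_lt_mul_of_pos_left hx0 hCpos
        _ = ρ/2 := by field_simp
    exact absurd huD.2 (not_le.mpr hcontr)
  -- exponential bound everywhere
  have hexp : ∀ T : ℝ, 0 ≤ T → ‖x T‖ ≤ C * ‖x 0‖ * Real.exp (-(α/2) * T) := by
    intro T hT
    apply duhamel_bound A hα hC hdecay f hfc x hx hT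
    intro s hs
    exact hfr _ (by linarith [hgood s hs.1])
  constructor
  · intro t ht
    calc ‖x t‖ < ρ/2 := hgood t ht
      _ < ρ := by linarith
      _ ≤ ε := hρε
  · rw [tendsto_zero_iff_norm_tendsto_zero]
    apply squeeze_zero' (Filter.Eventually.of_forall fun t => norm_nonneg _)
    · filter_upwards [Filter.eventually_ge_atTop (0:ℝ)] with t ht
      exact hexp t ht
    · have h1 : Filter.Tendsto (fun t : ℝ => (α/2) * t) Filter.atTop Filter.atTop :=
        Filter.Tendsto.const_mul_atTop (by linarith) Filter.tendsto_id
      have h2 : Filter.Tendsto (fun t : ℝ => Real.exp (-((α/2) * t))) Filter.atTop (nhds 0) :=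
        Real.tendsto_exp_neg_atTop_nhds_zero.comp h1
      have h3 : Filter.Tendsto (fun t : ℝ => C * ‖x 0‖ * Real.exp (-(α/2) * t))
          Filter.atTop (nhds (C * ‖x 0‖ * 0)) := by
        apply Filter.Tendsto.const_mul
        convert h2 using 2
        ring
      simpa using h3
end
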